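/- Let G = (V, E) be a strongly-connected MaxPSS-disjoint digraph with |V| ≥ 3. Then there exists a non-edge e' ∈ (V × V) \ E (with distinct endpoints) such that G + e' is MinRS-disjoint. -/

import Mathlib

variable {V : Type*}

/-- Reachability within `S` using edges of `E` whose both endpoints lie in `S`. -/
def ReachIn (E : V → V → Prop) (S : Set V) : V → V → Prop :=
  Relation.ReflTransGen (fun a b => E a b ∧ a ∈ S ∧ b ∈ S)

/-- The induced subgraph `G[S]` is strongly connected. -/
def StrongConn (E : V → V → Prop) (S : Set V) : Prop :=
  ∀ u ∈ S, ∀ v ∈ S, ReachIn E S u v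

/-- `X` is a MaxPSS of `V` in the strongly-connected system of `G`:
a maximal nonempty proper subset of `V` inducing a strongly-connected subgraph. -/
def IsMaxPSSg (G : V → V → Prop) (X : Set V) : Prop :=
  X.Nonempty ∧ X ⊂ Set.univ ∧ StrongConn G X ∧
    ∀ Z : Set V, Z.Nonempty → Z ⊂ Set.univ → StrongConn G Z → X ⊆ Z → Z = X

/-- `G` is MaxPSS-disjoint. -/
def MaxPSSDisjG (G : V → V → Prop) : Prop :=
  ∀ X X', IsMaxPSSg G X → IsMaxPSSg G X' → X ≠ X' → X ∩ X' = ∅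

/-- `Y` is a removable set of a strongly-connected digraph `G` on `V`. -/
def IsRSg (G : V → V → Prop) (Y : Set V) : Prop :=
  Y.Nonempty ∧ Y ⊂ Set.univ ∧ StrongConn G (Set.univ \ Y)

/-- `Y` is a minimal removable set of `G`. -/
def IsMinRSg (G : V → V → Prop) (Y : Set V) : Prop :=
  IsRSg G Y ∧ ∀ Z, IsRSg G Z → Z ⊆ Y → Z = Y

/-- `G` is MinRS-disjoint. -/
def MinRSDisjG (G : V → V → Prop) : Prop :=
  ∀ Y Y', IsMinRSg G Y → IsMinRSg G Y' → Y ≠ Y' → Y ∩ Y' = ∅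

section Aux

open Set Relation

lemma reachIn_mono_set {E : V → V → Prop} {S T : Set V} (h : S ⊆ T) {u v : V}
    (hr : ReachIn E S u v) : ReachIn E T u v :=
  Relation.ReflTransGen.mono (fun a b hab => ⟨hab.1, h hab.2.1, h hab.2.2⟩) u v hr

lemma reachIn_mono_rel {E E' : V → V → Prop} (h : ∀ a b, E a b → E' a b) {S : Set V} {u v : V}
    (hr : ReachIn E S u v) : ReachIn E' S u v :=
  Relation.ReflTransGen.mono (fun a b hab => ⟨h a b hab.1, hab.2.1, hab.2.2⟩) u v hr

lemma sc_union {E : V → V → Prop} {A B : Set V} (hA : StrongConn E A) (hB : StrongConn E B)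
    (hAB : (A ∩ B).Nonempty) : StrongConn E (A ∪ B) := by
  obtain ⟨c, hcA, hcB⟩ := hAB
  intro u hu v hv
  have h1 : ReachIn E (A ∪ B) u c := by
    rcases hu with hu | hu
    · exact reachIn_mono_set Set.subset_union_left (hA u hu c hcA)
    · exact reachIn_mono_set Set.subset_union_right (hB u hu c hcB)
  have h2 : ReachIn E (A ∪ B) c v := by
    rcases hv with hv | hv
    · exact reachIn_mono_set Set.subset_union_left (hA c hcA v hv)
    · exact reachIn_mono_set Set.subset_union_right (hB c hcB v hv)
  exact h1.trans h2

/-- Generic reduction: if `univ \ {c}` is strongly connected in `H`, then `H` is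
MinRS-disjoint. -/
lemma minRSDisj_of_vertex (H : V → V → Prop) (c : V) (hne : ∃ v : V, v ≠ c)
    (hS : StrongConn H (Set.univ \ {c})) : MinRSDisjG H := by
  -- basic facts about `univ \ {c}`
  have hCne : (Set.univ \ {c} : Set V).Nonempty := by
    obtain ⟨v, hv⟩ := hne
    exact ⟨v, Set.mem_univ v, by simpa using hv⟩
  have hCproper : (Set.univ \ {c} : Set V) ⊂ Set.univ := by
    rw [Set.ssubset_univ_iff]
    intro h
    have : c ∈ (Set.univ \ {c} : Set V) := by rw [h]; exact Set.mem_univ c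
    simp at this
  -- extract facts about a MinRS
  have key : ∀ Y : Set V, IsMinRSg H Y →
      ((Set.univ \ Y).Nonempty ∧ (Set.univ \ Y) ⊂ Set.univ ∧ StrongConn H (Set.univ \ Y) ∧
        ∀ Z : Set V, Z.Nonempty → Z ⊂ Set.univ → StrongConn H Z → (Set.univ \ Y) ⊆ Z →
          Z = Set.univ \ Y) := by
    rintro Y ⟨⟨hYne, hYss, hYsc⟩, hYmin⟩
    refine ⟨?_, ?_, hYsc, ?_⟩
    · obtain ⟨x, hx1, hx2⟩ := Set.exists_of_ssubset hYss
      exact ⟨x, hx1, hx2⟩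
    · rw [Set.ssubset_univ_iff]
      intro h
      obtain ⟨y, hy⟩ := hYne
      have : y ∈ Set.univ \ Y := by rw [h]; exact Set.mem_univ y
      exact this.2 hy
    · intro Z hZne hZss hZsc hsub
      have hWrs : IsRSg H (Set.univ \ Z) := by
        refine ⟨?_, ?_, ?_⟩
        · obtain ⟨x, hx1, hx2⟩ := Set.exists_of_ssubset hZss
          exact ⟨x, hx1, hx2⟩
        · rw [Set.ssubset_univ_iff]
          intro h
          obtain ⟨z, hz⟩ := hZne
          have : z ∈ Set.univ \ Z := by rw [h]; exact Set.mem_univ z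
          exact this.2 hz
        · rwa [Set.diff_diff_cancel_left (Set.subset_univ Z)]
      have hWY : Set.univ \ Z ⊆ Y := by
        intro v hv
        by_contra hvY
        exact hv.2 (hsub ⟨Set.mem_univ v, hvY⟩)
      have := hYmin _ hWrs hWY
      rw [← this, Set.diff_diff_cancel_left (Set.subset_univ Z)]
  intro Y Y' hY hY' hYne'
  obtain ⟨hXne, hXss, hXsc, hXmax⟩ := key Y hY
  obtain ⟨hX'ne, hX'ss, hX'sc, hX'max⟩ := key Y' hY'
  set X := Set.univ \ Y with hXdef
  set X' := Set.univ \ Y' with hX'def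
  have hYX : Y = Set.univ \ X := by
    rw [hXdef, Set.diff_diff_cancel_left (Set.subset_univ Y)]
  have hY'X' : Y' = Set.univ \ X' := by
    rw [hX'def, Set.diff_diff_cancel_left (Set.subset_univ Y')]
  have hXX' : X ≠ X' := by
    intro h
    apply hYne'
    rw [hYX, hY'X', h]
  -- main case analysis
  have hunion : X ∪ X' = Set.univ := by
    by_cases hc : c ∈ X <;> by_cases hc' : c ∈ X'
    · -- common vertex, union is strongly connected
      have hsc : StrongConn H (X ∪ X') := sc_union hXsc hX'sc ⟨c, hc, hc'⟩
      by_contra hne2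
      have hss : X ∪ X' ⊂ Set.univ := Set.ssubset_univ_iff.2 hne2
      have h1 := hXmax (X ∪ X') ⟨c, Or.inl hc⟩ hss hsc Set.subset_union_left
      have h2 := hX'max (X ∪ X') ⟨c, Or.inl hc⟩ hss hsc Set.subset_union_right
      exact hXX' (h1 ▸ h2)
    · -- c ∈ X, c ∉ X' : X' = univ \ {c}
      have hX'sub : X' ⊆ Set.univ \ {c} := by
        intro v hv
        refine ⟨Set.mem_univ v, ?_⟩
        intro hvc
        simp only [Set.mem_singleton_iff] at hvc
        exact hc' (hvc ▸ hv)
      have := hX'max (Set.univ \ {c}) hCne hCproper hS hX'sub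
      ext v
      simp only [Set.mem_union, Set.mem_univ, iff_true]
      by_cases hvc : v = c
      · exact Or.inl (hvc ▸ hc)
      · right; rw [← this]; exact ⟨Set.mem_univ v, by simpa using hvc⟩
    · have hXsub : X ⊆ Set.univ \ {c} := by
        intro v hv
        refine ⟨Set.mem_univ v, ?_⟩
        intro hvc
        simp only [Set.mem_singleton_iff] at hvc
        exact hc (hvc ▸ hv)
      have := hXmax (Set.univ \ {c}) hCne hCproper hS hXsub
      ext v
      simp only [Set.mem_union, Set.mem_univ, iff_true]
      by_cases hvc : v = c
      · exact Or.inr (hvc ▸ hc')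
      · left; rw [← this]; exact ⟨Set.mem_univ v, by simpa using hvc⟩
    · have hXsub : X ⊆ Set.univ \ {c} := by
        intro v hv
        exact ⟨Set.mem_univ v, by simp only [Set.mem_singleton_iff]; intro hvc; exact hc (hvc ▸ hv)⟩
      have hX'sub : X' ⊆ Set.univ \ {c} := by
        intro v hv
        exact ⟨Set.mem_univ v, by simp only [Set.mem_singleton_iff]; intro hvc; exact hc' (hvc ▸ hv)⟩
      have h1 := hXmax (Set.univ \ {c}) hCne hCproper hS hXsub
      have h2 := hX'max (Set.univ \ {c}) hCne hCproper hS hX'sub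
      exact absurd (h1 ▸ h2) hXX'
  ext v
  simp only [Set.mem_inter_iff, Set.mem_empty_iff_false, iff_false, not_and]
  intro hvY hvY'
  have : v ∈ X ∪ X' := by rw [hunion]; exact Set.mem_univ v
  rcases this with h | h
  · exact h.2 hvY
  · exact h.2 hvY'

end Aux

section Structure

open Set Relation List

/-- Along a chain inside `T`, the head reaches every element. -/
lemma chain_reach_head {E : V → V → Prop} {T : Set V} :
    ∀ (a : V) (l : List V), List.Chain E a l → (∀ x ∈ a :: l, x ∈ T) →
      ∀ v ∈ a :: l, ReachIn E T a v := by
  intro a l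
  induction l generalizing a with
  | nil =>
    intro _ _ v hv
    simp only [List.mem_singleton] at hv
    exact hv ▸ Relation.ReflTransGen.refl
  | cons x ls ih =>
    intro hch hmem v hv
    replace hch : E a x ∧ List.Chain E x ls := List.isChain_cons_cons.1 hch
    rcases List.mem_cons.1 hv with rfl | hv'
    · exact Relation.ReflTransGen.refl
    · have hstep : ReachIn E T a x :=
        Relation.ReflTransGen.single
          ⟨hch.1, hmem a (List.mem_cons_self), hmem x (by simp)⟩
      exact hstep.trans (ih x hch.2 (fun y hy => hmem y (List.mem_cons_of_mem _ hy)) v hv')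

/-- Along a chain inside `T`, every element reaches the last one. -/
lemma chain_reach_last {E : V → V → Prop} {T : Set V} :
    ∀ (a : V) (l : List V), List.Chain E a l → (∀ x ∈ a :: l, x ∈ T) →
      ∀ v ∈ a :: l, ReachIn E T v ((a :: l).getLast (List.cons_ne_nil _ _)) := by
  intro a l
  induction l generalizing a with
  | nil =>
    intro _ _ v hv
    simp only [List.mem_singleton] at hv
    subst hv
    simp only [List.getLast_singleton]
    exact Relation.ReflTransGen.refl
  | cons x ls ih =>
    intro hch hmem v hv
    replace hch : E a x ∧ List.Chain E x ls := List.isChain_cons_cons.1 hch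
    rw [List.getLast_cons_cons]
    rcases List.mem_cons.1 hv with rfl | hv'
    · have hstep : ReachIn E T v x :=
        Relation.ReflTransGen.single
          ⟨hch.1, hmem v (List.mem_cons_self), hmem x (by simp)⟩
      exact hstep.trans (ih x hch.2 (fun y hy => hmem y (List.mem_cons_of_mem _ hy)) x
        (List.mem_cons_self))
    · exact ih x hch.2 (fun y hy => hmem y (List.mem_cons_of_mem _ hy)) v hv'

/-- From a vertex of `X`, any path leaving to `t ∉ X` yields an exit edge followed by a
path staying outside `X`. -/
lemma cross_exit {E : V → V → Prop} {X : Set V} {t : V} (ht : t ∉ X) {s : V}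
    (hpath : Relation.ReflTransGen E s t) (hs : s ∈ X) :
    ∃ u q, u ∈ X ∧ q ∉ X ∧ E u q ∧
      Relation.ReflTransGen (fun a b => E a b ∧ a ∉ X ∧ b ∉ X) q t := by
  have main : (s ∈ X → ∃ u q, u ∈ X ∧ q ∉ X ∧ E u q ∧
        Relation.ReflTransGen (fun a b => E a b ∧ a ∉ X ∧ b ∉ X) q t) ∧
      (s ∉ X → (Relation.ReflTransGen (fun a b => E a b ∧ a ∉ X ∧ b ∉ X) s t ∨
        ∃ u q, u ∈ X ∧ q ∉ X ∧ E u q ∧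
          Relation.ReflTransGen (fun a b => E a b ∧ a ∉ X ∧ b ∉ X) q t)) := by
    clear hs
    induction hpath using Relation.ReflTransGen.head_induction_on with
    | refl => exact ⟨fun h => absurd h ht, fun _ => Or.inl Relation.ReflTransGen.refl⟩
    | head hstep _ ih =>
      rename_i a c _
      constructor
      · intro haX
        by_cases hcX : c ∈ X
        · exact ih.1 hcX
        · rcases ih.2 hcX with h | h
          · exact ⟨a, c, haX, hcX, hstep, h⟩
          · exact h
      · intro haX
        by_cases hcX : c ∈ X
        · exact Or.inr (ih.1 hcX)
        · rcases ih.2 hcX with h | h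
          · exact Or.inl (Relation.ReflTransGen.head ⟨hstep, haX, hcX⟩ h)
          · exact Or.inr h
  exact main.1 hs

/-- From a vertex outside `X`, any path entering `t ∈ X` yields a path staying outside `X`
followed by an entry edge. -/
lemma cross_enter {E : V → V → Prop} {X : Set V} {t : V} (ht : t ∈ X) {s : V}
    (hpath : Relation.ReflTransGen E s t) (hs : s ∉ X) :
    ∃ p w, p ∉ X ∧ w ∈ X ∧ E p w ∧
      Relation.ReflTransGen (fun a b => E a b ∧ a ∉ X ∧ b ∉ X) s p := by
  have main : s ∉ X → ∃ p w, p ∉ X ∧ w ∈ X ∧ E p w ∧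
      Relation.ReflTransGen (fun a b => E a b ∧ a ∉ X ∧ b ∉ X) s p := by
    clear hs
    induction hpath using Relation.ReflTransGen.head_induction_on with
    | refl => exact fun h => absurd ht h
    | head hstep _ ih =>
      rename_i a c _
      intro haX
      by_cases hcX : c ∈ X
      · exact ⟨a, c, haX, hcX, hstep, Relation.ReflTransGen.refl⟩
      · obtain ⟨p, w, hp, hw, hpw, hreach⟩ := ih hcX
        exact ⟨p, w, hp, hw, hpw, Relation.ReflTransGen.head ⟨hstep, haX, hcX⟩ hreach⟩
  exact main hs

/-- Existence of a maximal nonempty proper strongly-connected subset. -/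
lemma exists_maxPSS [Fintype V] (G : V → V → Prop) (hcard : 2 ≤ Fintype.card V) :
    ∃ X : Set V, X.Nonempty ∧ X ⊂ Set.univ ∧ StrongConn G X ∧
      ∀ Z : Set V, Z.Nonempty → Z ⊂ Set.univ → StrongConn G Z → X ⊆ Z → Z = X := by
  have : Nonempty V := Fintype.card_pos_iff.1 (by omega)
  obtain ⟨v⟩ := this
  set s : Set (Set V) := {Z | Z.Nonempty ∧ Z ⊂ Set.univ ∧ StrongConn G Z} with hs
  have hvs : ({v} : Set V) ∈ s := by
    refine ⟨⟨v, rfl⟩, ?_, ?_⟩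
    · rw [Set.ssubset_univ_iff]
      obtain ⟨w, hw⟩ := Fintype.exists_ne_of_one_lt_card (by omega) v
      intro h
      have : w ∈ ({v} : Set V) := by rw [h]; exact Set.mem_univ w
      exact hw this
    · intro u hu w hw
      simp only [Set.mem_singleton_iff] at hu hw
      subst hu; subst hw
      exact Relation.ReflTransGen.refl
  obtain ⟨X, hXs, hmax⟩ := Set.Finite.exists_maximalFor id s (Set.toFinite s) ⟨{v}, hvs⟩
  refine ⟨X, hXs.1, hXs.2.1, hXs.2.2, ?_⟩
  intro Z hZne hZss hZsc hsub
  exact Set.Subset.antisymm (hmax ⟨hZne, hZss, hZsc⟩ hsub) hsub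

/-- A third vertex distinct from two given ones. -/
lemma exists_third [Fintype V] (hcard : 3 ≤ Fintype.card V) (x y : V) :
    ∃ z : V, z ≠ x ∧ z ≠ y := by
  classical
  by_contra h
  push_neg at h
  have hsub : (Finset.univ : Finset V) ⊆ {x, y} := by
    intro z _
    rcases em (z = x) with rfl | hz
    · simp
    · simp [h z hz]
  have := Finset.card_le_card hsub
  have h2 : ({x, y} : Finset V).card ≤ 2 := Finset.card_insert_le x {y} |>.trans (by simp)
  rw [Finset.card_univ] at this
  omega

end Structure

section Main

open Set Relation List

lemma getLast_mid (q : V) (l₂ : List V) : ∀ (l₁ : List V) (a : V),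
    ((a :: (l₁ ++ q :: l₂)).getLast (List.cons_ne_nil _ _)) =
      ((q :: l₂).getLast (List.cons_ne_nil _ _)) := by
  intro l₁
  induction l₁ with
  | nil => intro a; rw [List.nil_append, List.getLast_cons_cons]
  | cons x ls ih => intro a; rw [List.cons_append, List.getLast_cons_cons]; exact ih x

lemma exists_patch [Fintype V] (G : V → V → Prop) (hSC : StrongConn G Set.univ)
    (hcard : 3 ≤ Fintype.card V) :
    ∃ c a b : V, a ≠ b ∧ a ≠ c ∧ b ≠ c ∧
      StrongConn (fun x y => G x y ∨ (x = a ∧ y = b)) (Set.univ \ {c}) := by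
  classical
  obtain ⟨X, hXne, hXss, hXsc, hXmax⟩ := exists_maxPSS G (by omega)
  obtain ⟨x₀, hx₀⟩ := hXne
  obtain ⟨y₀, -, hy₀⟩ := Set.exists_of_ssubset hXss
  have hreach : ∀ u v : V, Relation.ReflTransGen G u v := by
    intro u v
    exact Relation.ReflTransGen.mono (fun a b hab => hab.1) u v
      (hSC u (Set.mem_univ u) v (Set.mem_univ v))
  obtain ⟨u₀, q₀, hu₀, hq₀, huq₀, hout⟩ := cross_exit hy₀ (hreach x₀ y₀) hx₀
  obtain ⟨p₀, w₀, hp₀, hw₀, hpw₀, hout'⟩ := cross_enter hx₀ (hreach y₀ x₀) hy₀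
  have hqp : Relation.ReflTransGen (fun a b => G a b ∧ a ∉ X ∧ b ∉ X) q₀ p₀ := hout.trans hout'
  obtain ⟨l₀, hch₀, hlast₀⟩ := List.exists_isChain_cons_of_relationReflTransGen hqp
  have mem_out : ∀ (q : V) (l : List V),
      List.Chain (fun a b => G a b ∧ a ∉ X ∧ b ∉ X) q l → ∀ v ∈ l, v ∉ X := by
    intro q l
    induction l generalizing q with
    | nil => intro _ v hv; simp at hv
    | cons x ls ih =>
      intro hch v hv
      replace hch : (G q x ∧ q ∉ X ∧ x ∉ X) ∧ List.Chain (fun a b => G a b ∧ a ∉ X ∧ b ∉ X) x ls :=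
        List.isChain_cons_cons.1 hch
      rcases List.mem_cons.1 hv with rfl | hv'
      · exact hch.1.2.2
      · exact ih x hch.2 v hv'
  set P : ℕ → Prop := fun n => ∃ q : V, ∃ l : List V, l.length = n ∧
      q ∉ X ∧ (∀ v ∈ l, v ∉ X) ∧ List.Chain G q l ∧
      (∃ u ∈ X, G u q) ∧ (∃ w ∈ X, G ((q :: l).getLast (List.cons_ne_nil _ _)) w) with hP
  have hEar : ∃ n, P n := by
    refine ⟨l₀.length, q₀, l₀, rfl, hq₀, mem_out q₀ l₀ hch₀, ?_, ⟨u₀, hu₀, huq₀⟩,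
      ⟨w₀, hw₀, ?_⟩⟩
    · exact List.IsChain.imp (fun a b hab => hab.1) hch₀
    · rw [hlast₀]; exact hpw₀
  obtain ⟨q, l, hlen, hq, hl, hch, ⟨u, hu, huq⟩, ⟨w, hw, hlw⟩⟩ := Nat.find_spec hEar
  -- q does not appear in l, by minimality
  have hqnotl : q ∉ l := by
    intro hql
    obtain ⟨l₁, l₂, rfl⟩ := List.append_of_mem hql
    have hlt : l₂.length < Nat.find hEar := by
      have : (l₁ ++ q :: l₂).length = l₁.length + (l₂.length + 1) := by simp
      omega
    apply Nat.find_min hEar hlt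
    refine ⟨q, l₂, rfl, hq, ?_, ?_, ⟨u, hu, huq⟩, ⟨w, hw, ?_⟩⟩
    · intro v hv; exact hl v (by simp [hv])
    · exact (List.isChain_split (l₁ := q :: l₁).1 hch).2
    · rw [← getLast_mid q l₂ l₁ q]; exact hlw
  -- the union of X with the ear is strongly connected, hence everything
  set S : Set V := X ∪ {v | v ∈ q :: l} with hSdef
  have hsubS : ∀ v ∈ q :: l, v ∈ S := fun v hv => Or.inr hv
  have hXS : X ⊆ S := Set.subset_union_left
  have hlastmem : ((q :: l).getLast (List.cons_ne_nil _ _)) ∈ q :: l := List.getLast_mem _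
  have reach_fromX : ∀ x ∈ X, ∀ t ∈ S, ReachIn G S x t := by
    intro x hx t ht
    rcases ht with ht | ht
    · exact reachIn_mono_set hXS (hXsc x hx t ht)
    · refine (reachIn_mono_set hXS (hXsc x hx u hu)).trans ?_
      refine (Relation.ReflTransGen.single ⟨huq, hXS hu, hsubS q (List.mem_cons_self)⟩).trans ?_
      exact chain_reach_head q l hch hsubS t ht
  have reach_exit : ∀ s ∈ q :: l, ReachIn G S s w := by
    intro s hs
    refine (chain_reach_last q l hch hsubS s hs).trans ?_
    exact Relation.ReflTransGen.single ⟨hlw, hsubS _ hlastmem, hXS hw⟩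
  have hSsc : StrongConn G S := by
    intro s hs t ht
    rcases hs with hs | hs
    · exact reach_fromX s hs t ht
    · exact (reach_exit s hs).trans (reach_fromX w hw t ht)
  have hSuniv : S = Set.univ := by
    by_contra h
    have hss : S ⊂ Set.univ := Set.ssubset_univ_iff.2 h
    have := hXmax S ⟨q, hsubS q (List.mem_cons_self)⟩ hss hSsc hXS
    exact hq (this ▸ hsubS q (List.mem_cons_self))
  -- split on whether the ear has length 1
  cases l with
  | nil =>
    have hXeq : X = Set.univ \ {q} := by
      apply Set.eq_of_subset_of_subset
      · intro v hv
        refine ⟨Set.mem_univ v, ?_⟩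
        intro hvq
        simp only [Set.mem_singleton_iff] at hvq
        exact hq (hvq ▸ hv)
      · rintro v ⟨-, hvq⟩
        simp only [Set.mem_singleton_iff] at hvq
        have hvS : v ∈ S := by rw [hSuniv]; exact Set.mem_univ v
        rcases hvS with h | h
        · exact h
        · simp only [Set.mem_setOf_eq, List.mem_singleton] at h
          exact absurd h hvq
    obtain ⟨a, ha, -⟩ := exists_third hcard q q
    obtain ⟨b, hb1, hb2⟩ := exists_third hcard q a
    refine ⟨q, a, b, Ne.symm hb2, ha, hb1, ?_⟩
    intro v1 h1 v2 h2
    rw [← hXeq] at h1 h2 ⊢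
    exact reachIn_mono_rel (fun x y => Or.inl) (hXsc v1 h1 v2 h2)
  | cons b l' =>
    replace hch : G q b ∧ List.Chain G b l' := List.isChain_cons_cons.1 hch
    obtain ⟨hqb, hch'⟩ := hch
    have hbX : b ∉ X := hl b (List.mem_cons_self)
    have hbq : b ≠ q := by
      intro h
      exact hqnotl (h ▸ (List.mem_cons_self (a := b) (l := l')))
    set T : Set V := Set.univ \ {q} with hTdef
    have hXT : X ⊆ T := by
      intro v hv
      refine ⟨Set.mem_univ v, ?_⟩
      intro hvq
      simp only [Set.mem_singleton_iff] at hvq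
      exact hq (hvq ▸ hv)
    have hlT : ∀ v ∈ b :: l', v ∈ T := by
      intro v hv
      refine ⟨Set.mem_univ v, ?_⟩
      intro hvq
      simp only [Set.mem_singleton_iff] at hvq
      subst hvq
      exact hqnotl hv
    have hlw' : G ((b :: l').getLast (List.cons_ne_nil _ _)) w := by
      rw [List.getLast_cons_cons] at hlw; exact hlw
    have hlastmem' : ((b :: l').getLast (List.cons_ne_nil _ _)) ∈ b :: l' := List.getLast_mem _
    have exit_to_w : ∀ v ∈ b :: l', ReachIn G T v w := by
      intro v hv
      refine (chain_reach_last b l' hch' hlT v hv).trans ?_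
      exact Relation.ReflTransGen.single ⟨hlw', hlT _ hlastmem', hXT hw⟩
    have claim_to_u : ∀ v ∈ T, ReachIn G T v u := by
      intro v hv
      have hvS : v ∈ S := by rw [hSuniv]; exact Set.mem_univ v
      rcases hvS with h | h
      · exact reachIn_mono_set hXT (hXsc v h u hu)
      · rcases List.mem_cons.1 h with rfl | h'
        · exact absurd (Set.mem_singleton _) hv.2
        · exact (exit_to_w v h').trans (reachIn_mono_set hXT (hXsc w hw u hu))
    have claim_from_b : ∀ v ∈ T, ReachIn G T b v := by
      intro v hv
      have hvS : v ∈ S := by rw [hSuniv]; exact Set.mem_univ v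
      rcases hvS with h | h
      · exact (exit_to_w b (List.mem_cons_self)).trans
          (reachIn_mono_set hXT (hXsc w hw v h))
      · rcases List.mem_cons.1 h with rfl | h'
        · exact absurd (Set.mem_singleton _) hv.2
        · exact chain_reach_head b l' hch' hlT v h'
    refine ⟨q, u, b, ?_, ?_, hbq, ?_⟩
    · intro h; exact hbX (h ▸ hu)
    · intro h; exact hq (h ▸ hu)
    · intro v1 h1 v2 h2
      have r1 : ReachIn (fun x y => G x y ∨ (x = u ∧ y = b)) T v1 u :=
        reachIn_mono_rel (fun x y => Or.inl) (claim_to_u v1 h1)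
      have r2 : ReachIn (fun x y => G x y ∨ (x = u ∧ y = b)) T b v2 :=
        reachIn_mono_rel (fun x y => Or.inl) (claim_from_b v2 h2)
      have step : ReachIn (fun x y => G x y ∨ (x = u ∧ y = b)) T u b :=
        Relation.ReflTransGen.single ⟨Or.inr ⟨rfl, rfl⟩, hXT hu, hlT b (List.mem_cons_self)⟩
      exact (r1.trans step).trans r2

lemma exists_nonedge [Fintype V] (G : V → V → Prop) (hcard : 3 ≤ Fintype.card V)
    (hdisj : MaxPSSDisjG G) : ∃ a b : V, a ≠ b ∧ ¬ G a b := by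
  by_contra hcon
  push_neg at hcon
  have hmax : ∀ v : V, IsMaxPSSg G (Set.univ \ {v}) := by
    intro v
    obtain ⟨z, hz, -⟩ := exists_third hcard v v
    refine ⟨⟨z, Set.mem_univ z, by simpa using hz⟩, ?_, ?_, ?_⟩
    · rw [Set.ssubset_univ_iff]
      intro h
      have : v ∈ Set.univ \ {v} := by rw [h]; exact Set.mem_univ v
      simp at this
    · intro u1 h1 u2 h2
      rcases em (u1 = u2) with rfl | hne
      · exact Relation.ReflTransGen.refl
      · exact Relation.ReflTransGen.single ⟨hcon u1 u2 hne, h1, h2⟩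
    · intro Z hZne hZss hZsc hsub
      rcases em (v ∈ Z) with hv | hv
      · exfalso
        apply hZss.2
        intro t _
        rcases em (t = v) with rfl | ht
        · exact hv
        · exact hsub ⟨Set.mem_univ t, by simpa using ht⟩
      · apply Set.eq_of_subset_of_subset _ hsub
        intro t htZ
        refine ⟨Set.mem_univ t, ?_⟩
        intro htv
        simp only [Set.mem_singleton_iff] at htv
        exact hv (htv ▸ htZ)
  obtain ⟨x⟩ : Nonempty V := Fintype.card_pos_iff.1 (by omega)
  obtain ⟨y, hy, -⟩ := exists_third hcard x x
  obtain ⟨z, hz1, hz2⟩ := exists_third hcard x y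
  have hne : (Set.univ \ {x} : Set V) ≠ Set.univ \ {y} := by
    intro h
    have : y ∈ Set.univ \ {x} := ⟨Set.mem_univ y, by simpa using hy⟩
    rw [h] at this
    simp at this
  have := hdisj _ _ (hmax x) (hmax y) hne
  have hzmem : z ∈ (Set.univ \ {x} : Set V) ∩ (Set.univ \ {y}) :=
    ⟨⟨Set.mem_univ z, by simpa using hz1⟩, ⟨Set.mem_univ z, by simpa using hz2⟩⟩
  rw [this] at hzmem
  exact hzmem

end Main

theorem stmt_18 [Fintype V] (G : V → V → Prop)
    (hSC : StrongConn G Set.univ) (hcard : 3 ≤ Fintype.card V)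
    (hdisj : MaxPSSDisjG G) :
    ∃ a b : V, a ≠ b ∧ ¬ G a b ∧
      MinRSDisjG (fun x y => G x y ∨ (x = a ∧ y = b)) := by
  obtain ⟨a₀, b₀, hab₀, hG₀⟩ := exists_nonedge G hcard hdisj
  obtain ⟨c, a, b, hab, hac, hbc, hS⟩ := exists_patch G hSC hcard
  have hnec : ∃ v : V, v ≠ c := ⟨a, hac⟩
  by_cases hGab : G a b
  · have hS' : StrongConn G (Set.univ \ {c}) := by
      intro u hu v hv
      refine reachIn_mono_rel ?_ (hS u hu v hv)
      intro x y hxy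
      rcases hxy with h | ⟨rfl, rfl⟩
      · exact h
      · exact hGab
    refine ⟨a₀, b₀, hab₀, hG₀, minRSDisj_of_vertex _ c hnec ?_⟩
    intro u hu v hv
    exact reachIn_mono_rel (fun x y => Or.inl) (hS' u hu v hv)
  · exact ⟨a, b, hab, hGab, minRSDisj_of_vertex _ c hnec hS⟩
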